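/- Let ε > 0 and n ≥ 2. Suppose F is a distribution over n-element sets S ⊆ [N] such that deleting any single order statistic yields nearly identical distributions: d_TV(S₋ᵢ, S₋ⱼ) ≤ ε/n² for all i, j ∈ [n], where S₋ᵢ is S with its i-th smallest element removed. Then for all index sets I, J ⊆ [n] with |I| = |J|, d_TV(S_I, S_J) ≤ ε, where S_I = {s_k : k ∈ I} and s₁ < ... < s_n are the elements of S in increasing order. -/

import Mathlib

open Finset

/-- Total variation distance between the pushforward distributions of the
probability mass function `μ` on a finite sample space `Ω` under the maps
`f, g : Ω → Finset ℤ`. -/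
noncomputable def pushTV {Ω : Type*} [Fintype Ω] (μ : Ω → ℝ) (f g : Ω → Finset ℤ) : ℝ :=
  (1/2 : ℝ) * ∑' A : Finset ℤ,
    |(∑ ω ∈ Finset.univ.filter (fun ω => f ω = A), μ ω)
      - (∑ ω ∈ Finset.univ.filter (fun ω => g ω = A), μ ω)|

namespace OSIaux

variable {Ω : Type*} [Fintype Ω]

noncomputable def pmass (μ : Ω → ℝ) (f : Ω → Finset ℤ) (A : Finset ℤ) : ℝ :=
  ∑ ω ∈ Finset.univ.filter (fun ω => f ω = A), μ ω

lemma pmass_eq_zero (μ : Ω → ℝ) (f : Ω → Finset ℤ) (A : Finset ℤ)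
    (h : A ∉ Finset.univ.image f) : pmass μ f A = 0 := by
  rw [pmass]
  have : Finset.univ.filter (fun ω => f ω = A) = ∅ := by
    ext ω
    simp only [Finset.mem_filter, Finset.mem_univ, true_and, Finset.notMem_empty, iff_false]
    intro hfa
    exact h (Finset.mem_image.2 ⟨ω, Finset.mem_univ ω, hfa⟩)
  simp [this]

lemma pushTV_eq_sum (μ : Ω → ℝ) (f g : Ω → Finset ℤ) (t : Finset (Finset ℤ))
    (hf : Finset.univ.image f ⊆ t) (hg : Finset.univ.image g ⊆ t) :
    pushTV μ f g = (1/2 : ℝ) * ∑ A ∈ t, |pmass μ f A - pmass μ g A| := by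
  rw [pushTV]
  congr 1
  apply tsum_eq_sum
  intro A hA
  rw [show (∑ ω ∈ Finset.univ.filter (fun ω => f ω = A), μ ω) = pmass μ f A from rfl,
    show (∑ ω ∈ Finset.univ.filter (fun ω => g ω = A), μ ω) = pmass μ g A from rfl,
    pmass_eq_zero μ f A (fun h => hA (hf h)), pmass_eq_zero μ g A (fun h => hA (hg h))]
  simp


lemma pushTV_self (μ : Ω → ℝ) (f : Ω → Finset ℤ) : pushTV μ f f = 0 := by
  simp [pushTV, sub_self]

lemma pushTV_symm (μ : Ω → ℝ) (f g : Ω → Finset ℤ) : pushTV μ f g = pushTV μ g f := by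
  rw [pushTV, pushTV]
  congr 1
  apply tsum_congr
  intro A
  rw [abs_sub_comm]

lemma pushTV_triangle (μ : Ω → ℝ) (f g h : Ω → Finset ℤ) :
    pushTV μ f h ≤ pushTV μ f g + pushTV μ g h := by
  classical
  set t := Finset.univ.image f ∪ Finset.univ.image g ∪ Finset.univ.image h with ht
  have h1 : Finset.univ.image f ⊆ t := (Finset.subset_union_left).trans Finset.subset_union_left
  have h2 : Finset.univ.image g ⊆ t := (Finset.subset_union_right).trans Finset.subset_union_left
  have h3 : Finset.univ.image h ⊆ t := Finset.subset_union_right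
  rw [pushTV_eq_sum μ f h t h1 h3, pushTV_eq_sum μ f g t h1 h2, pushTV_eq_sum μ g h t h2 h3,
    ← mul_add, ← Finset.sum_add_distrib]
  have : ∀ A ∈ t, |pmass μ f A - pmass μ h A|
      ≤ |pmass μ f A - pmass μ g A| + |pmass μ g A - pmass μ h A| := fun A _ => abs_sub_le _ _ _
  have := Finset.sum_le_sum this
  linarith

lemma pushTV_comp_le (μ : Ω → ℝ) (φ : Finset ℤ → Finset ℤ) (f g : Ω → Finset ℤ) :
    pushTV μ (fun ω => φ (f ω)) (fun ω => φ (g ω)) ≤ pushTV μ f g := by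
  classical
  set S := Finset.univ.image f ∪ Finset.univ.image g with hS
  set T := S.image φ with hT
  have hfS : Finset.univ.image f ⊆ S := Finset.subset_union_left
  have hgS : Finset.univ.image g ⊆ S := Finset.subset_union_right
  have hfT : Finset.univ.image (fun ω => φ (f ω)) ⊆ T := by
    intro B hB
    obtain ⟨ω, -, rfl⟩ := Finset.mem_image.1 hB
    exact Finset.mem_image.2 ⟨f ω, hfS (Finset.mem_image.2 ⟨ω, Finset.mem_univ ω, rfl⟩), rfl⟩
  have hgT : Finset.univ.image (fun ω => φ (g ω)) ⊆ T := by
    intro B hB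
    obtain ⟨ω, -, rfl⟩ := Finset.mem_image.1 hB
    exact Finset.mem_image.2 ⟨g ω, hgS (Finset.mem_image.2 ⟨ω, Finset.mem_univ ω, rfl⟩), rfl⟩
  rw [pushTV_eq_sum μ _ _ T hfT hgT, pushTV_eq_sum μ f g S hfS hgS]
  apply mul_le_mul_of_nonneg_left ?_ (by norm_num)
  have key : ∀ (u : Ω → Finset ℤ), Finset.univ.image u ⊆ S → ∀ B,
      pmass μ (fun ω => φ (u ω)) B = ∑ A ∈ S.filter (fun A => φ A = B), pmass μ u A := by
    intro u hu B
    simp only [pmass]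
    rw [Finset.sum_fiberwise_eq_sum_filter Finset.univ (S.filter (fun A => φ A = B)) u μ]
    congr 1
    ext ω
    simp only [Finset.mem_filter, Finset.mem_univ, true_and]
    exact ⟨fun h2 => ⟨hu (Finset.mem_image.2 ⟨ω, Finset.mem_univ ω, rfl⟩), h2⟩, fun h2 => h2.2⟩
  calc ∑ B ∈ T, |pmass μ (fun ω => φ (f ω)) B - pmass μ (fun ω => φ (g ω)) B|
      = ∑ B ∈ T, |∑ A ∈ S.filter (fun A => φ A = B), (pmass μ f A - pmass μ g A)| := by
        apply Finset.sum_congr rfl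
        intro B _
        rw [key f hfS B, key g hgS B, Finset.sum_sub_distrib]
    _ ≤ ∑ B ∈ T, ∑ A ∈ S.filter (fun A => φ A = B), |pmass μ f A - pmass μ g A| := by
        apply Finset.sum_le_sum
        intro B _
        exact Finset.abs_sum_le_sum_abs _ _
    _ = ∑ A ∈ S.filter (fun A => φ A ∈ T), |pmass μ f A - pmass μ g A| :=
        Finset.sum_fiberwise_eq_sum_filter S T φ _
    _ = ∑ A ∈ S, |pmass μ f A - pmass μ g A| := by
        congr 1
        apply Finset.filter_true_of_mem
        intro A hA
        exact Finset.mem_image.2 ⟨A, hA, rfl⟩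


def sel (Q : Finset ℕ) (A : Finset ℤ) : Finset ℤ :=
  A.filter (fun x => (A.filter (fun y => y < x)).card ∈ Q)

lemma filter_lt_image {n : ℕ} (f : Fin n → ℤ) (hf : StrictMono f) (B : Finset (Fin n))
    (k : Fin n) :
    (B.image f).filter (fun y => y < f k) = (B.filter (fun l => l < k)).image f := by
  ext x
  simp only [Finset.mem_filter, Finset.mem_image]
  constructor
  · rintro ⟨⟨l, hl, rfl⟩, hlt⟩
    exact ⟨l, ⟨hl, hf.lt_iff_lt.1 hlt⟩, rfl⟩
  · rintro ⟨l, ⟨hl, hlk⟩, rfl⟩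
    exact ⟨⟨l, hl, rfl⟩, hf hlk⟩

lemma sel_image {n : ℕ} (f : Fin n → ℤ) (hf : StrictMono f) (B : Finset (Fin n)) (Q : Finset ℕ) :
    sel Q (B.image f) = (B.filter (fun k => (B.filter (fun l => l < k)).card ∈ Q)).image f := by
  rw [sel]
  ext x
  simp only [Finset.mem_filter, Finset.mem_image]
  constructor
  · rintro ⟨⟨k, hk, rfl⟩, hq⟩
    refine ⟨k, ⟨hk, ?_⟩, rfl⟩
    rwa [filter_lt_image f hf B k,
      Finset.card_image_of_injective _ hf.injective] at hq
  · rintro ⟨k, ⟨hk, hq⟩, rfl⟩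
    refine ⟨⟨k, hk, rfl⟩, ?_⟩
    rwa [filter_lt_image f hf B k, Finset.card_image_of_injective _ hf.injective]

lemma card_lt_compl {n : ℕ} (i k : Fin n) (hki : k ≠ i) :
    (({i}ᶜ : Finset (Fin n)).filter (fun l => l < k)).card
      = if (k : ℕ) < (i : ℕ) then (k : ℕ) else (k : ℕ) - 1 := by
  have h1 : ({i}ᶜ : Finset (Fin n)).filter (fun l => l < k) = (Finset.Iio k).erase i := by
    ext l
    simp only [Finset.mem_filter, Finset.mem_compl, Finset.mem_singleton, Finset.mem_erase,
      Finset.mem_Iio]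
  have hv : (k : ℕ) ≠ (i : ℕ) := fun h => hki (Fin.ext h)
  rw [h1]
  by_cases h : i < k
  · rw [Finset.card_erase_of_mem (Finset.mem_Iio.2 h), Fin.card_Iio]
    rw [if_neg (by omega : ¬ ((k:ℕ) < (i:ℕ)))]
  · have hik : (k : ℕ) < (i : ℕ) := by
      rw [Fin.lt_def] at h
      omega
    rw [Finset.erase_eq_of_notMem (by simpa using h), Fin.card_Iio, if_pos hik]





lemma idA {n : ℕ} (e e' : Fin n) (he' : (e' : ℕ) = (e : ℕ) + 1)
    (I : Finset (Fin n)) (heI : e ∈ I) (he'I : e' ∉ I) :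
    (({e'}ᶜ : Finset (Fin n)).filter (fun k => ((({e'}ᶜ : Finset (Fin n)).filter
        (fun l => l < k)).card ∈ I.image (fun k' : Fin n => if (k' : ℕ) ≤ (e : ℕ) then (k' : ℕ) else (k' : ℕ) - 1))))
      = I := by
  ext k
  simp only [Finset.mem_filter, Finset.mem_compl, Finset.mem_singleton]
  constructor
  · rintro ⟨hk, hq⟩
    rw [card_lt_compl e' k hk] at hq
    obtain ⟨k', hk'I, hg⟩ := Finset.mem_image.1 hq
    have hk'ne : (k' : ℕ) ≠ (e' : ℕ) := fun h => he'I (Fin.ext h ▸ hk'I)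
    have hkv : (k : ℕ) ≠ (e' : ℕ) := fun h => hk (Fin.ext h)
    have hkk' : (k : ℕ) = (k' : ℕ) := by split_ifs at hg <;> omega
    exact (Fin.ext hkk' : k = k') ▸ hk'I
  · intro hkI
    have hk : k ≠ e' := fun h => he'I (h ▸ hkI)
    have hkv : (k : ℕ) ≠ (e' : ℕ) := fun h => hk (Fin.ext h)
    refine ⟨hk, ?_⟩
    rw [card_lt_compl e' k hk]
    exact Finset.mem_image.2 ⟨k, hkI, by split_ifs <;> omega⟩

lemma idB {n : ℕ} (e e' : Fin n) (he' : (e' : ℕ) = (e : ℕ) + 1)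
    (I : Finset (Fin n)) (heI : e ∈ I) (he'I : e' ∉ I) :
    (({e}ᶜ : Finset (Fin n)).filter (fun k => ((({e}ᶜ : Finset (Fin n)).filter
        (fun l => l < k)).card ∈ I.image (fun k' : Fin n => if (k' : ℕ) ≤ (e : ℕ) then (k' : ℕ) else (k' : ℕ) - 1))))
      = insert e' (I.erase e) := by
  ext k
  simp only [Finset.mem_filter, Finset.mem_compl, Finset.mem_singleton, Finset.mem_insert,
    Finset.mem_erase]
  constructor
  · rintro ⟨hk, hq⟩
    rw [card_lt_compl e k hk] at hq
    obtain ⟨k', hk'I, hg⟩ := Finset.mem_image.1 hq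
    have hk'ne : (k' : ℕ) ≠ (e' : ℕ) := fun h => he'I (Fin.ext h ▸ hk'I)
    have hkv : (k : ℕ) ≠ (e : ℕ) := fun h => hk (Fin.ext h)
    have hcase : (k : ℕ) = (e' : ℕ) ∨ (k : ℕ) = (k' : ℕ) := by
      split_ifs at hg <;> omega
    rcases hcase with h | h
    · exact Or.inl (Fin.ext h)
    · exact Or.inr ⟨hk, (Fin.ext h : k = k') ▸ hk'I⟩
  · intro h
    rcases h with rfl | ⟨hke, hkI⟩
    · have hk : k ≠ e := fun h => by rw [h] at he'; omega
      refine ⟨hk, ?_⟩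
      rw [card_lt_compl e k hk]
      exact Finset.mem_image.2 ⟨e, heI, by split_ifs <;> omega⟩
    · have hkv : (k : ℕ) ≠ (e' : ℕ) := fun h => he'I (Fin.ext h ▸ hkI)
      have hkev : (k : ℕ) ≠ (e : ℕ) := fun h => hke (Fin.ext h)
      refine ⟨hke, ?_⟩
      rw [card_lt_compl e k hke]
      exact Finset.mem_image.2 ⟨k, hkI, by split_ifs <;> omega⟩


lemma step_up {Ω : Type*} [Fintype Ω] {n : ℕ} (μ : Ω → ℝ) (s : Ω → Fin n → ℤ)
    (hmono : ∀ ω, StrictMono (s ω)) (δ : ℝ)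
    (hdel : ∀ i j : Fin n,
      pushTV μ (fun ω => Finset.image (s ω) ({i}ᶜ : Finset (Fin n)))
               (fun ω => Finset.image (s ω) ({j}ᶜ : Finset (Fin n))) ≤ δ)
    (I : Finset (Fin n)) (e e' : Fin n) (he' : (e' : ℕ) = (e : ℕ) + 1)
    (heI : e ∈ I) (he'I : e' ∉ I) :
    pushTV μ (fun ω => Finset.image (s ω) I)
      (fun ω => Finset.image (s ω) (insert e' (I.erase e))) ≤ δ := by
  set Q : Finset ℕ := I.image (fun k' : Fin n => if (k' : ℕ) ≤ (e : ℕ) then (k' : ℕ) else (k' : ℕ) - 1) with hQ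
  have hA : ∀ ω, sel Q (Finset.image (s ω) ({e'}ᶜ : Finset (Fin n))) = Finset.image (s ω) I := by
    intro ω
    rw [sel_image (s ω) (hmono ω), idA e e' he' I heI he'I]
  have hB : ∀ ω, sel Q (Finset.image (s ω) ({e}ᶜ : Finset (Fin n)))
      = Finset.image (s ω) (insert e' (I.erase e)) := by
    intro ω
    rw [sel_image (s ω) (hmono ω), idB e e' he' I heI he'I]
  calc pushTV μ (fun ω => Finset.image (s ω) I)
        (fun ω => Finset.image (s ω) (insert e' (I.erase e)))
      = pushTV μ (fun ω => sel Q (Finset.image (s ω) ({e'}ᶜ : Finset (Fin n))))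
          (fun ω => sel Q (Finset.image (s ω) ({e}ᶜ : Finset (Fin n)))) := by
        congr 1
        · exact funext fun ω => (hA ω).symm
        · exact funext fun ω => (hB ω).symm
    _ ≤ pushTV μ (fun ω => Finset.image (s ω) ({e'}ᶜ : Finset (Fin n)))
          (fun ω => Finset.image (s ω) ({e}ᶜ : Finset (Fin n))) :=
        pushTV_comp_le μ (sel Q) _ _
    _ ≤ δ := hdel e' e
lemma sum_range_card_le {n : ℕ} (A : Finset (Fin n)) :
    ∑ j ∈ Finset.range A.card, j ≤ ∑ k ∈ A, (k : ℕ) := by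
  induction A using Finset.induction_on_max with
  | empty => simp
  | insert a s ha ih =>
      have hsub : s ⊆ Finset.Iio a := fun x hx => Finset.mem_Iio.2 (ha x hx)
      have hs : s.card ≤ (a : ℕ) := by
        calc s.card ≤ (Finset.Iio a).card := Finset.card_le_card hsub
          _ = (a : ℕ) := Fin.card_Iio a
      have hns : a ∉ s := fun h => lt_irrefl a (ha a h)
      rw [Finset.sum_insert hns, Finset.card_insert_of_notMem hns, Finset.sum_range_succ]
      omega

def canon (n c : ℕ) : Finset (Fin n) := Finset.univ.filter (fun k => (k : ℕ) < c)

lemma card_canon (n c : ℕ) (hc : c ≤ n) : (canon n c).card = c := by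
  have himg : (canon n c).image (Fin.val) = Finset.range c := by
    ext j
    simp only [canon, Finset.mem_image, Finset.mem_filter, Finset.mem_univ, true_and,
      Finset.mem_range]
    constructor
    · rintro ⟨k, hk, rfl⟩; exact hk
    · intro hj; exact ⟨⟨j, lt_of_lt_of_le hj hc⟩, hj, rfl⟩
  calc (canon n c).card = ((canon n c).image Fin.val).card :=
        (Finset.card_image_of_injective _ Fin.val_injective).symm
    _ = c := by rw [himg, Finset.card_range]

lemma eq_canon {n : ℕ} (I : Finset (Fin n))
    (h : ∀ e ∈ I, ∀ j : Fin n, (j : ℕ) + 1 = (e : ℕ) → j ∈ I) :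
    I = canon n I.card := by
  have down : ∀ d : ℕ, ∀ e ∈ I, ∀ j : Fin n, (j : ℕ) + d = (e : ℕ) → j ∈ I := by
    intro d
    induction d with
    | zero =>
        intro e he j hj
        exact (Fin.ext (by omega) : j = e) ▸ he
    | succ d ih =>
        intro e he j hj
        have hlt : (j : ℕ) + d < n := by have := e.isLt; omega
        have hj' : (⟨(j : ℕ) + d, hlt⟩ : Fin n) ∈ I := h e he _ (by simp; omega)
        exact ih _ hj' j (by simp)
  have hsub : I ⊆ canon n I.card := by
    intro k hk
    have hIic : Finset.Iic k ⊆ I := by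
      intro j hj
      have hjk : (j : ℕ) ≤ (k : ℕ) := by
        have := Finset.mem_Iic.1 hj
        exact this
      exact down ((k : ℕ) - (j : ℕ)) k hk j (by omega)
    have hcard : (k : ℕ) + 1 ≤ I.card := by
      calc (k : ℕ) + 1 = (Finset.Iic k).card := (Fin.card_Iic k).symm
        _ ≤ I.card := Finset.card_le_card hIic
    simp only [canon, Finset.mem_filter, Finset.mem_univ, true_and]
    omega
  have hcn : I.card ≤ n := le_trans (Finset.card_le_univ I) (by simp)
  exact Finset.eq_of_subset_of_card_le hsub (le_of_eq (card_canon n I.card hcn))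

lemma coeff_bound {n : ℕ} (I J : Finset (Fin n)) :
    ((∑ k ∈ I, (k : ℕ)) - ∑ j ∈ Finset.range I.card, j)
      + ((∑ k ∈ J, (k : ℕ)) - ∑ j ∈ Finset.range J.card, j) ≤ n ^ 2 := by
  have hSI : ∑ k ∈ I, (k : ℕ) ≤ ∑ k : Fin n, (k : ℕ) :=
    Finset.sum_le_sum_of_subset (Finset.subset_univ I)
  have hSJ : ∑ k ∈ J, (k : ℕ) ≤ ∑ k : Fin n, (k : ℕ) :=
    Finset.sum_le_sum_of_subset (Finset.subset_univ J)
  have huniv : ∑ k : Fin n, (k : ℕ) = ∑ j ∈ Finset.range n, j :=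
    Fin.sum_univ_eq_sum_range (fun i => i) n
  have hg : (∑ j ∈ Finset.range n, j) * 2 = n * (n - 1) := Finset.sum_range_id_mul_two n
  have hnn : n * (n - 1) ≤ n ^ 2 := by
    calc n * (n - 1) ≤ n * n := Nat.mul_le_mul_left n (Nat.sub_le n 1)
      _ = n ^ 2 := (sq n).symm
  omega


lemma chain {Ω : Type*} [Fintype Ω] {n : ℕ} (μ : Ω → ℝ) (s : Ω → Fin n → ℤ)
    (hmono : ∀ ω, StrictMono (s ω)) (δ : ℝ) (hδ : 0 ≤ δ)
    (hdel : ∀ i j : Fin n, pushTV μ (fun ω => Finset.image (s ω) ({i}ᶜ : Finset (Fin n)))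
               (fun ω => Finset.image (s ω) ({j}ᶜ : Finset (Fin n))) ≤ δ) :
    ∀ m : ℕ, ∀ I : Finset (Fin n), (∑ k ∈ I, (k : ℕ)) ≤ m →
      pushTV μ (fun ω => Finset.image (s ω) I) (fun ω => Finset.image (s ω) (canon n I.card))
        ≤ (((∑ k ∈ I, (k : ℕ)) - ∑ j ∈ Finset.range I.card, j : ℕ) : ℝ) * δ := by
  intro m
  induction m with
  | zero =>
      intro I hI
      have hcanon : ∀ e ∈ I, ∀ j : Fin n, (j : ℕ) + 1 = (e : ℕ) → j ∈ I := by
        intro e he j hj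
        exfalso
        have hle := Finset.single_le_sum (f := fun k : Fin n => (k : ℕ))
          (fun k _ => Nat.zero_le _) he
        omega
      rw [← eq_canon I hcanon, pushTV_self]
      exact mul_nonneg (Nat.cast_nonneg _) hδ
  | succ m ih =>
      intro I hI
      by_cases hmv : ∃ e ∈ I, ∃ j : Fin n, (j : ℕ) + 1 = (e : ℕ) ∧ j ∉ I
      · obtain ⟨e, heI, e₀, he₀, he₀I⟩ := hmv
        set I' := insert e₀ (I.erase e) with hI'
        have hne : e₀ ∉ I.erase e := fun h => he₀I (Finset.mem_of_mem_erase h)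
        have hcard : I'.card = I.card := by
          rw [hI', Finset.card_insert_of_notMem hne, Finset.card_erase_of_mem heI]
          have : 1 ≤ I.card := Finset.card_pos.2 ⟨e, heI⟩
          omega
        have hsum_er : ∑ k ∈ I.erase e, (k : ℕ) + (e : ℕ) = ∑ k ∈ I, (k : ℕ) :=
          Finset.sum_erase_add I _ heI
        have hsumI' : ∑ k ∈ I', (k : ℕ) = (e₀ : ℕ) + ∑ k ∈ I.erase e, (k : ℕ) := by
          rw [hI', Finset.sum_insert hne]
        have hstep := step_up μ s hmono δ hdel I' e₀ e (by omega)
          (Finset.mem_insert_self e₀ _)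
          (by
            intro h
            rcases Finset.mem_insert.1 h with h | h
            · rw [h] at he₀; omega
            · exact (Finset.notMem_erase e I) h)
        have hIrec : insert e (I'.erase e₀) = I := by
          rw [hI', Finset.erase_insert hne, Finset.insert_erase heI]
        rw [hIrec] at hstep
        have hC := sum_range_card_le I'
        have htri := pushTV_triangle μ (fun ω => Finset.image (s ω) I)
          (fun ω => Finset.image (s ω) I') (fun ω => Finset.image (s ω) (canon n I.card))
        have h1 : pushTV μ (fun ω => Finset.image (s ω) I)
            (fun ω => Finset.image (s ω) I') ≤ δ := by
          rw [pushTV_symm]; exact hstep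
        have h2 : pushTV μ (fun ω => Finset.image (s ω) I')
            (fun ω => Finset.image (s ω) (canon n I.card))
            ≤ (((∑ k ∈ I', (k : ℕ)) - ∑ j ∈ Finset.range I.card, j : ℕ) : ℝ) * δ := by
          have := ih I' (by omega)
          rwa [hcard] at this
        have hnat : ((∑ k ∈ I, (k : ℕ)) - ∑ j ∈ Finset.range I.card, j)
            = ((∑ k ∈ I', (k : ℕ)) - ∑ j ∈ Finset.range I.card, j) + 1 := by
          rw [hcard] at hC
          omega
        have hcast : (((∑ k ∈ I, (k : ℕ)) - ∑ j ∈ Finset.range I.card, j : ℕ) : ℝ)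
            = (((∑ k ∈ I', (k : ℕ)) - ∑ j ∈ Finset.range I.card, j : ℕ) : ℝ) + 1 := by
          rw [hnat]; push_cast; ring
        rw [hcast]
        linarith [htri, h1, h2]
      · push_neg at hmv
        rw [← eq_canon I hmv, pushTV_self]
        exact mul_nonneg (Nat.cast_nonneg _) hδ

end OSIaux

/-- If a random `n`-element set `S ⊆ [N]` (given by its sorted listing
`s : Ω → Fin n → ℤ`) satisfies `d_TV(S₋ᵢ, S₋ⱼ) ≤ ε/n²` for all single-element
deletions of order statistics, then `d_TV(S_I, S_J) ≤ ε` for all index sets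
`I, J ⊆ [n]` with `|I| = |J|`. -/
theorem osi_amplification {Ω : Type*} [Fintype Ω] (n N : ℕ) (hn : 2 ≤ n)
    (ε : ℝ) (hε : 0 < ε)
    (μ : Ω → ℝ) (hμ0 : ∀ ω, 0 ≤ μ ω) (hμ1 : ∑ ω, μ ω = 1)
    (s : Ω → Fin n → ℤ)
    (hmono : ∀ ω, StrictMono (s ω))
    (hrange : ∀ ω k, 1 ≤ s ω k ∧ s ω k ≤ (N : ℤ))
    (hdel : ∀ i j : Fin n,
      pushTV μ (fun ω => Finset.image (s ω) ({i}ᶜ : Finset (Fin n)))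
               (fun ω => Finset.image (s ω) ({j}ᶜ : Finset (Fin n))) ≤ ε / n ^ 2) :
    ∀ I J : Finset (Fin n), I.card = J.card →
      pushTV μ (fun ω => Finset.image (s ω) I) (fun ω => Finset.image (s ω) J) ≤ ε := by
  intro I J hIJ
  have hn0 : (0 : ℝ) < (n : ℝ) ^ 2 := by
    have : (0 : ℝ) < (n : ℝ) := by exact_mod_cast Nat.lt_of_lt_of_le (by norm_num) hn
    positivity
  have hδ : 0 ≤ ε / (n : ℝ) ^ 2 := le_of_lt (div_pos hε hn0)
  have t1 := OSIaux.chain μ s hmono (ε / (n : ℝ) ^ 2) hδ hdel (∑ k ∈ I, (k : ℕ)) I (le_refl _)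
  have t2 := OSIaux.chain μ s hmono (ε / (n : ℝ) ^ 2) hδ hdel (∑ k ∈ J, (k : ℕ)) J (le_refl _)
  rw [← hIJ] at t2
  have hb := OSIaux.coeff_bound I J
  rw [← hIJ] at hb
  have htri := OSIaux.pushTV_triangle μ (fun ω => Finset.image (s ω) I)
    (fun ω => Finset.image (s ω) (OSIaux.canon n I.card)) (fun ω => Finset.image (s ω) J)
  have t2' : pushTV μ (fun ω => Finset.image (s ω) (OSIaux.canon n I.card))
      (fun ω => Finset.image (s ω) J)
      ≤ (((∑ k ∈ J, (k : ℕ)) - ∑ j ∈ Finset.range I.card, j : ℕ) : ℝ) * (ε / (n : ℝ) ^ 2) := by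
    rw [OSIaux.pushTV_symm]
    exact t2
  have hcast : (((∑ k ∈ I, (k : ℕ)) - ∑ j ∈ Finset.range I.card, j : ℕ) : ℝ)
      + (((∑ k ∈ J, (k : ℕ)) - ∑ j ∈ Finset.range I.card, j : ℕ) : ℝ) ≤ ((n : ℝ) ^ 2) := by
    have : (((((∑ k ∈ I, (k : ℕ)) - ∑ j ∈ Finset.range I.card, j)
        + ((∑ k ∈ J, (k : ℕ)) - ∑ j ∈ Finset.range I.card, j) : ℕ)) : ℝ) ≤ (((n ^ 2 : ℕ)) : ℝ) :=
      Nat.cast_le.2 hb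
    push_cast at this
    linarith
  have hmul : ((((∑ k ∈ I, (k : ℕ)) - ∑ j ∈ Finset.range I.card, j : ℕ) : ℝ)
      + (((∑ k ∈ J, (k : ℕ)) - ∑ j ∈ Finset.range I.card, j : ℕ) : ℝ)) * (ε / (n : ℝ) ^ 2)
      ≤ ((n : ℝ) ^ 2) * (ε / (n : ℝ) ^ 2) :=
    mul_le_mul_of_nonneg_right hcast hδ
  have hfin : ((n : ℝ) ^ 2) * (ε / (n : ℝ) ^ 2) = ε := by
    field_simp
  nlinarith [htri, t1, t2', hmul]
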